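/- arXiv:math/0702578 — 3 statements merged into one kernel-verified Lean document; each statement's English description precedes it below -/
import Mathlib

section
/- (Proposition 'formule' of the paper.) For every α : U → ℝ and every λ : T → ℝ, the identity q(α,λ) = q'(α) − q''(α) holds. -/
open Finset

/-- Proposition "formule" of the paper: `q = q' − q''`. -/
theorem stmt_2 {T U : Type*} [Fintype T] [Fintype U] [Nonempty T] [Nonempty U]
    (σ : U → U) (hσ : ∀ u, σ (σ u) = u)
    (a : T → ℝ) (ha : ∀ t, 0 < a t)
    (c : T → U → ℝ) (hc : ∀ t u, 0 ≤ c t u)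
    (x : U → ℝ) (hx : ∀ u, x u = ∑ t, c t (σ u) * a t)
    (d : T → ℝ) (hd : ∀ t, d t = ∑ u, c t u * x u)
    (hxpos : ∀ u, 0 < x u) (hdpos : ∀ t, 0 < d t)
    (y : (U → ℝ) → U → ℝ) (hy : ∀ α u, y α u = α (σ u))
    (z : (U → ℝ) → T → ℝ) (hz : ∀ α t, z α t = ∑ u, c t (σ u) * α u)
    (P : (U → ℝ) → (T → ℝ) → ℝ)
    (hP : ∀ α lam, P α lam = (∑ u, α u * α (σ u)) - ∑ t, a t * lam t)
    (Hodge : T → (U → ℝ) → (T → ℝ) → ℝ)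
    (hHodge : ∀ t α lam, Hodge t α lam = ∑ u, c t u * (x u * lam t - y α u * z α t))
    (q : (U → ℝ) → (T → ℝ) → ℝ)
    (hq : ∀ α lam, q α lam = P α lam + ∑ t, (a t / d t) * Hodge t α lam)
    (q₁ : (U → ℝ) → ℝ)
    (hq₁ : ∀ α, q₁ α = (1 / 2) * ∑ t, ∑ u, ∑ u',
      (a t * c t u * c t u') / (d t * x u * x u') * (x u * y α u' - y α u * x u') ^ 2)
    (q₂ : (U → ℝ) → ℝ)
    (hq₂ : ∀ α, q₂ α = (1 / 2) * ∑ u,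
      (x u * y α (σ u) - y α u * x (σ u)) ^ 2 / (x u * x (σ u))) :
    ∀ (α : U → ℝ) (lam : T → ℝ), q α lam = q₁ α - q₂ α := by
  intro α lam
  have hσinv : Function.Involutive σ := hσ
  have hre : ∀ f : U → ℝ, ∑ u, f (σ u) = ∑ u, f u := by
    intro f
    exact Fintype.sum_bijective σ hσinv.bijective _ _ (fun u => rfl)
  have hxne : ∀ u, x u ≠ 0 := fun u => (hxpos u).ne'
  have hdne : ∀ t, d t ≠ 0 := fun t => (hdpos t).ne'
  have hzy : ∀ t, ∑ u, c t u * y α u = z α t := by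
    intro t
    rw [hz]
    have := hre (fun u => c t (σ u) * α u)
    simp only [hσ] at this
    simp only [hy]
    exact this
  have hxσ : ∀ u, x (σ u) = ∑ t, c t u * a t := by
    intro u; rw [hx]; simp [hσ]
  set A := ∑ u, α u * α (σ u) with hA
  set B := ∑ t, a t * (z α t) ^ 2 / d t with hB
  set C := ∑ u, α u ^ 2 * x u / x (σ u) with hC
  set S : T → ℝ := fun t => ∑ u, c t u * (y α u) ^ 2 / x u with hS
  have h1 : q α lam = A - B := by
    rw [hq, hP]
    have hH : ∀ t, (a t / d t) * Hodge t α lam = a t * lam t - a t * (z α t) ^ 2 / d t := by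
      intro t
      have key : ∑ u, c t u * (x u * lam t - y α u * z α t)
          = (∑ u, c t u * x u) * lam t - (∑ u, c t u * y α u) * z α t := by
        rw [Finset.sum_mul, Finset.sum_mul, ← Finset.sum_sub_distrib]
        exact Finset.sum_congr rfl fun u _ => by ring
      have hHt : Hodge t α lam = d t * lam t - z α t * z α t := by
        rw [hHodge, key, ← hd, hzy]
      rw [hHt]
      field_simp [hdne t]
    rw [Finset.sum_congr rfl fun t _ => hH t, Finset.sum_sub_distrib]
    ring
  have h3 : q₂ α = C - A := by
    rw [hq₂]
    have hterm : ∀ u, (x u * y α (σ u) - y α u * x (σ u)) ^ 2 / (x u * x (σ u))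
        = α u ^ 2 * x u / x (σ u) + α (σ u) ^ 2 * x (σ u) / x u - 2 * (α u * α (σ u)) := by
      intro u
      simp only [hy, hσ]
      field_simp [hxne u, hxne (σ u)]
      ring
    rw [Finset.sum_congr rfl fun u _ => hterm u]
    rw [Finset.sum_sub_distrib, Finset.sum_add_distrib]
    have h2nd : ∑ u, α (σ u) ^ 2 * x (σ u) / x u = C := by
      rw [hC]
      have := hre (fun u => α u ^ 2 * x u / x (σ u))
      simp only [hσ] at this
      exact this
    have h3rd : ∑ u, 2 * (α u * α (σ u)) = 2 * A := by
      rw [hA, Finset.mul_sum]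
    rw [h2nd, h3rd]
    ring
  have h2 : q₁ α = C - B := by
    rw [hq₁]
    have hinner : ∀ t, (∑ u, ∑ u',
        (a t * c t u * c t u') / (d t * x u * x u') * (x u * y α u' - y α u * x u') ^ 2)
        = 2 * (a t * S t) - 2 * (a t * (z α t) ^ 2 / d t) := by
      intro t
      have hpt : ∀ u u', (a t * c t u * c t u') / (d t * x u * x u')
            * (x u * y α u' - y α u * x u') ^ 2
          = (a t / d t * (c t u * x u)) * (c t u' * (y α u') ^ 2 / x u')
            - (2 * a t / d t * (c t u * y α u)) * (c t u' * y α u')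
            + (a t / d t * (c t u * (y α u) ^ 2 / x u)) * (c t u' * x u') := by
        intro u u'
        field_simp [hxne u, hxne u', hdne t]
        ring
      have hin : ∀ u : U, (∑ u', (a t * c t u * c t u') / (d t * x u * x u')
            * (x u * y α u' - y α u * x u') ^ 2)
          = (a t / d t * (c t u * x u)) * S t
            - (2 * a t / d t * (c t u * y α u)) * z α t
            + (a t / d t * (c t u * (y α u) ^ 2 / x u)) * d t := by
        intro u
        rw [Finset.sum_congr rfl fun u' _ => hpt u u']
        rw [Finset.sum_add_distrib, Finset.sum_sub_distrib,
          ← Finset.mul_sum, ← Finset.mul_sum, ← Finset.mul_sum]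
        rw [hS, hzy, hd]
      rw [Finset.sum_congr rfl fun u _ => hin u]
      rw [Finset.sum_add_distrib, Finset.sum_sub_distrib,
        ← Finset.sum_mul, ← Finset.sum_mul, ← Finset.sum_mul,
        ← Finset.mul_sum, ← Finset.mul_sum, ← Finset.mul_sum]
      rw [hzy, ← hd, hS]
      field_simp [hdne t]
      ring
    rw [Finset.sum_congr rfl fun t _ => hinner t]
    have hsum : ∑ t, (2 * (a t * S t) - 2 * (a t * (z α t) ^ 2 / d t))
        = 2 * (∑ t, a t * S t) - 2 * B := by
      rw [Finset.sum_sub_distrib, ← Finset.mul_sum, ← Finset.mul_sum, hB]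
    rw [hsum]
    have hCS : ∑ t, a t * S t = C := by
      have step1 : ∑ t, a t * S t = ∑ u, (y α u) ^ 2 / x u * x (σ u) := by
        simp only [hS, Finset.mul_sum]
        rw [Finset.sum_comm]
        refine Finset.sum_congr rfl fun u _ => ?_
        rw [hxσ, Finset.mul_sum]
        exact Finset.sum_congr rfl fun t _ => by ring
      rw [step1]
      have heq : ∀ u, (y α u) ^ 2 / x u * x (σ u) = α (σ u) ^ 2 * x (σ u) / x u := by
        intro u; rw [hy]; ring
      rw [Finset.sum_congr rfl fun u _ => heq u, hC]
      have := hre (fun u => α u ^ 2 * x u / x (σ u))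
      simp only [hσ] at this
      exact this
    rw [hCS]
    ring
  rw [h1, h2, h3]
  ring
end

section
/- For every α : U → ℝ one has q'(α) ≥ 0 and q''(α) ≥ 0; consequently, for every α : U → ℝ and λ : T → ℝ, −q''(α) ≤ q(α,λ) ≤ q'(α). (This is the paper's decomposition of q into a nonnegative part q' and a negative part −q'', showing that the method of Arrondo–Caravantes can fail exactly because of the term q''.) -/
open Finset

/-- `q' ≥ 0` and `q'' ≥ 0`; consequently `−q'' ≤ q ≤ q'`. -/
theorem stmt_3 {T U : Type*} [Fintype T] [Fintype U] [Nonempty T] [Nonempty U]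
    (σ : U → U) (hσ : ∀ u, σ (σ u) = u)
    (a : T → ℝ) (ha : ∀ t, 0 < a t)
    (c : T → U → ℝ) (hc : ∀ t u, 0 ≤ c t u)
    (x : U → ℝ) (hx : ∀ u, x u = ∑ t, c t (σ u) * a t)
    (d : T → ℝ) (hd : ∀ t, d t = ∑ u, c t u * x u)
    (hxpos : ∀ u, 0 < x u) (hdpos : ∀ t, 0 < d t)
    (y : (U → ℝ) → U → ℝ) (hy : ∀ α u, y α u = α (σ u))
    (z : (U → ℝ) → T → ℝ) (hz : ∀ α t, z α t = ∑ u, c t (σ u) * α u)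
    (P : (U → ℝ) → (T → ℝ) → ℝ)
    (hP : ∀ α lam, P α lam = (∑ u, α u * α (σ u)) - ∑ t, a t * lam t)
    (Hodge : T → (U → ℝ) → (T → ℝ) → ℝ)
    (hHodge : ∀ t α lam, Hodge t α lam = ∑ u, c t u * (x u * lam t - y α u * z α t))
    (q : (U → ℝ) → (T → ℝ) → ℝ)
    (hq : ∀ α lam, q α lam = P α lam + ∑ t, (a t / d t) * Hodge t α lam)
    (q₁ : (U → ℝ) → ℝ)
    (hq₁ : ∀ α, q₁ α = (1 / 2) * ∑ t, ∑ u, ∑ u',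
      (a t * c t u * c t u') / (d t * x u * x u') * (x u * y α u' - y α u * x u') ^ 2)
    (q₂ : (U → ℝ) → ℝ)
    (hq₂ : ∀ α, q₂ α = (1 / 2) * ∑ u,
      (x u * y α (σ u) - y α u * x (σ u)) ^ 2 / (x u * x (σ u))) :
    (∀ α : U → ℝ, 0 ≤ q₁ α) ∧ (∀ α : U → ℝ, 0 ≤ q₂ α) ∧
    (∀ (α : U → ℝ) (lam : T → ℝ), -q₂ α ≤ q α lam ∧ q α lam ≤ q₁ α) := by
  have hxne : ∀ u, x u ≠ 0 := fun u => (hxpos u).ne'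
  have hdne : ∀ t, d t ≠ 0 := fun t => (hdpos t).ne'
  -- reindexing along the involution σ
  have hreindex : ∀ f : U → ℝ, ∑ u, f (σ u) = ∑ u, f u := by
    intro f
    exact Equiv.sum_comp (Function.Involutive.toPerm σ hσ) f
  -- q₁ nonneg
  have hq1nn : ∀ α : U → ℝ, 0 ≤ q₁ α := by
    intro α
    rw [hq₁]
    apply mul_nonneg (by norm_num)
    apply Finset.sum_nonneg; intro t _
    apply Finset.sum_nonneg; intro u _
    apply Finset.sum_nonneg; intro u' _
    apply mul_nonneg _ (sq_nonneg _)
    apply div_nonneg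
    · exact mul_nonneg (mul_nonneg (ha t).le (hc t u)) (hc t u')
    · exact (mul_pos (mul_pos (hdpos t) (hxpos u)) (hxpos u')).le
  -- q₂ nonneg
  have hq2nn : ∀ α : U → ℝ, 0 ≤ q₂ α := by
    intro α
    rw [hq₂]
    apply mul_nonneg (by norm_num)
    apply Finset.sum_nonneg; intro u _
    exact div_nonneg (sq_nonneg _) (mul_pos (hxpos u) (hxpos (σ u))).le
  refine ⟨hq1nn, hq2nn, ?_⟩
  intro α lam
  -- alternative formula for z
  have hzalt : ∀ t, z α t = ∑ u, c t u * α (σ u) := by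
    intro t
    rw [hz]
    rw [← hreindex (fun u => c t (σ u) * α u)]
    exact Finset.sum_congr rfl fun u _ => by rw [hσ]
  -- x at σ u
  have hxσ : ∀ u, x (σ u) = ∑ t, c t u * a t := by
    intro u
    rw [hx]
    exact Finset.sum_congr rfl fun t _ => by rw [hσ]
  -- Hodge simplification
  have hHodge' : ∀ t, Hodge t α lam = d t * lam t - z α t ^ 2 := by
    intro t
    rw [hHodge]
    have h1 : ∀ u, c t u * (x u * lam t - y α u * z α t)
        = (c t u * x u) * lam t - (c t u * α (σ u)) * z α t := fun u => by rw [hy]; ring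
    rw [Finset.sum_congr rfl fun u _ => h1 u, Finset.sum_sub_distrib,
      ← Finset.sum_mul, ← Finset.sum_mul, ← hd, ← hzalt]
    ring
  -- q simplification
  have hqval : q α lam = (∑ u, α u * α (σ u)) - ∑ t, (a t / d t) * z α t ^ 2 := by
    rw [hq, hP]
    have h1 : ∀ t, (a t / d t) * Hodge t α lam = a t * lam t - (a t / d t) * z α t ^ 2 := by
      intro t
      rw [hHodge' t]
      field_simp [hdne t]
    rw [Finset.sum_congr rfl fun t _ => h1 t, Finset.sum_sub_distrib]
    ring
  -- q₂ value
  have hq2val : q₂ α = (∑ u, α (σ u) ^ 2 * x (σ u) / x u) - ∑ u, α u * α (σ u) := by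
    rw [hq₂]
    have h1 : ∀ u, (x u * y α (σ u) - y α u * x (σ u)) ^ 2 / (x u * x (σ u))
        = x u * α u ^ 2 / x (σ u) - 2 * (α u * α (σ u)) + α (σ u) ^ 2 * x (σ u) / x u := by
      intro u
      rw [hy, hy, hσ]
      field_simp [hxne u, hxne (σ u)]
      ring
    rw [Finset.sum_congr rfl fun u _ => h1 u]
    rw [Finset.sum_add_distrib, Finset.sum_sub_distrib]
    have h2 : ∑ u, x u * α u ^ 2 / x (σ u) = ∑ u, α (σ u) ^ 2 * x (σ u) / x u := by
      rw [← hreindex (fun u => x u * α u ^ 2 / x (σ u))]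
      exact Finset.sum_congr rfl fun u _ => by rw [hσ]; ring
    have h3 : ∑ u, 2 * (α u * α (σ u)) = 2 * ∑ u, α u * α (σ u) := by
      rw [Finset.mul_sum]
    rw [h2, h3]
    ring
  -- q₁ value
  have hq1val : q₁ α = (∑ u, α (σ u) ^ 2 * x (σ u) / x u) - ∑ t, (a t / d t) * z α t ^ 2 := by
    rw [hq₁]
    have hinner : ∀ t, (∑ u, ∑ u',
        (a t * c t u * c t u') / (d t * x u * x u') * (x u * y α u' - y α u * x u') ^ 2)
        = 2 * (a t * (∑ u, c t u * α (σ u) ^ 2 / x u) - (a t / d t) * z α t ^ 2) := by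
      intro t
      have hterm : ∀ u u', (a t * c t u * c t u') / (d t * x u * x u')
          * (x u * y α u' - y α u * x u') ^ 2
          = (a t / d t) * ((c t u * x u) * (c t u' * α (σ u') ^ 2 / x u')
            - 2 * ((c t u * α (σ u)) * (c t u' * α (σ u')))
            + (c t u * α (σ u) ^ 2 / x u) * (c t u' * x u')) := by
        intro u u'
        rw [hy, hy]
        field_simp [hdne t, hxne u, hxne u']
        ring
      rw [Finset.sum_congr rfl fun u _ => Finset.sum_congr rfl fun u' _ => hterm u u']
      have hrow : ∀ u : U, (∑ u', (a t / d t) * ((c t u * x u) * (c t u' * α (σ u') ^ 2 / x u')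
            - 2 * ((c t u * α (σ u)) * (c t u' * α (σ u')))
            + (c t u * α (σ u) ^ 2 / x u) * (c t u' * x u')))
          = (a t / d t) * ((c t u * x u) * (∑ u', c t u' * α (σ u') ^ 2 / x u')
            - 2 * ((c t u * α (σ u)) * z α t)
            + (c t u * α (σ u) ^ 2 / x u) * d t) := by
        intro u
        rw [← Finset.mul_sum]
        congr 1
        rw [Finset.sum_add_distrib, Finset.sum_sub_distrib,
          ← Finset.mul_sum, ← Finset.mul_sum, ← Finset.mul_sum, ← Finset.mul_sum,
          ← hzalt t, ← hd t]
      rw [Finset.sum_congr rfl fun u _ => hrow u]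
      rw [← Finset.mul_sum, Finset.sum_add_distrib, Finset.sum_sub_distrib,
        ← Finset.sum_mul, ← Finset.mul_sum, ← Finset.sum_mul, ← Finset.sum_mul,
        ← hd t, ← hzalt t]
      set S := ∑ u, c t u * α (σ u) ^ 2 / x u with hS
      field_simp [hdne t]
      ring
    rw [Finset.sum_congr rfl fun t _ => hinner t]
    have hswap : ∑ t, a t * (∑ u, c t u * α (σ u) ^ 2 / x u)
        = ∑ u, α (σ u) ^ 2 * x (σ u) / x u := by
      have h4 : ∀ t, a t * (∑ u, c t u * α (σ u) ^ 2 / x u)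
          = ∑ u, (c t u * a t) * (α (σ u) ^ 2 / x u) := by
        intro t; rw [Finset.mul_sum]; exact Finset.sum_congr rfl fun u _ => by ring
      rw [Finset.sum_congr rfl fun t _ => h4 t, Finset.sum_comm]
      refine Finset.sum_congr rfl fun u _ => ?_
      rw [← Finset.sum_mul, ← hxσ]
      ring
    rw [Finset.mul_sum]
    have h5 : ∀ t, (1:ℝ)/2 * (2 * (a t * (∑ u, c t u * α (σ u) ^ 2 / x u)
        - (a t / d t) * z α t ^ 2))
        = a t * (∑ u, c t u * α (σ u) ^ 2 / x u) - (a t / d t) * z α t ^ 2 := fun t => by ring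
    rw [Finset.sum_congr rfl fun t _ => h5 t, Finset.sum_sub_distrib, hswap]
  exact ⟨by linarith [hq1nn α, hq2nn α, hqval, hq1val, hq2val],
    by linarith [hq1nn α, hq2nn α, hqval, hq1val, hq2val]⟩
end

section
/- (Abstract form of Corollary 'multi' of the paper.) Let α : U → ℝ and λ : T → ℝ satisfy: (i) P(α,λ) = 0; (ii) Hodge_t(α,λ) ≤ 0 for every t ∈ T; (iii) x(u)·α(u) = x(σ(u))·α(σ(u)) for every u ∈ U (vanishing of the minors indexed by Poincaré-dual pairs). Assume moreover the connectivity condition: for all u, u' ∈ U there is a finite chain u = u₀, u₁, …, u_k = u' in U such that for each i there exists t ∈ T with c(t)(u_i) > 0 and c(t)(u_{i+1}) > 0. Then there exists ρ ∈ ℝ such that α(σ(u)) = ρ·x(u) for every u ∈ U and λ(t) = ρ·z(t) for every t ∈ T (i.e., the 2-row matrix M with columns (x(u), α(σ(u))) for u ∈ U and (z(t), λ(t)) for t ∈ T has rank at most one). -/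
open Finset

/-- Abstract form of Corollary "multi" of the paper: if `P = 0`, all `Hodge_t ≤ 0`,
all minors indexed by Poincaré-dual pairs vanish, and the support of the Pieri
coefficients is connected, then the matrix `M` has rank at most one. -/
theorem stmt_4 {T U : Type*} [Fintype T] [Fintype U] [Nonempty T] [Nonempty U]
    (σ : U → U) (hσ : ∀ u, σ (σ u) = u)
    (a : T → ℝ) (ha : ∀ t, 0 < a t)
    (c : T → U → ℝ) (hc : ∀ t u, 0 ≤ c t u)
    (x : U → ℝ) (hx : ∀ u, x u = ∑ t, c t (σ u) * a t)
    (d : T → ℝ) (hd : ∀ t, d t = ∑ u, c t u * x u)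
    (hxpos : ∀ u, 0 < x u) (hdpos : ∀ t, 0 < d t)
    (α : U → ℝ) (lam : T → ℝ)
    (y : U → ℝ) (hy : ∀ u, y u = α (σ u))
    (z : T → ℝ) (hz : ∀ t, z t = ∑ u, c t (σ u) * α u)
    (P : ℝ) (hP : P = (∑ u, α u * α (σ u)) - ∑ t, a t * lam t)
    (Hodge : T → ℝ)
    (hHodge : ∀ t, Hodge t = ∑ u, c t u * (x u * lam t - y u * z t))
    (hP0 : P = 0)
    (hHodge0 : ∀ t, Hodge t ≤ 0)
    (hminor : ∀ u, x u * α u = x (σ u) * α (σ u))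
    (hconn : ∀ u u' : U,
      Relation.ReflTransGen (fun v w => ∃ t, 0 < c t v ∧ 0 < c t w) u u') :
    ∃ ρ : ℝ, (∀ u, α (σ u) = ρ * x u) ∧ (∀ t, lam t = ρ * z t) := by
  have hinv : Function.Involutive σ := hσ
  have hsum : ∀ f : U → ℝ, ∑ u, f (σ u) = ∑ u, f u := fun f =>
    Equiv.sum_comp (Function.Involutive.toPerm σ hinv) f
  have hxne : ∀ u, x u ≠ 0 := fun u => (hxpos u).ne'
  have hdne : ∀ t, d t ≠ 0 := fun t => (hdpos t).ne'
  -- z in terms of y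
  have hz' : ∀ t, z t = ∑ u, c t u * y u := by
    intro t
    rw [hz]
    calc ∑ u, c t (σ u) * α u = ∑ u, c t (σ u) * y (σ u) := by
          refine Finset.sum_congr rfl fun u _ => ?_
          rw [hy, hσ]
      _ = ∑ u, c t u * y u := hsum (fun u => c t u * y u)
  -- x (σ u)
  have hxσ : ∀ u, x (σ u) = ∑ t, c t u * a t := by
    intro u; rw [hx]
    refine Finset.sum_congr rfl fun t _ => ?_
    rw [hσ]
  -- S
  set S : T → ℝ := fun t => ∑ u, c t u * y u ^ 2 / x u with hS
  -- Hodge simple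
  have hH2 : ∀ t, Hodge t = d t * lam t - z t ^ 2 := by
    intro t
    rw [hHodge]
    have e1 : ∑ u, c t u * (x u * lam t - y u * z t)
        = (∑ u, c t u * x u) * lam t - (∑ u, c t u * y u) * z t := by
      rw [Finset.sum_mul, Finset.sum_mul, ← Finset.sum_sub_distrib]
      exact Finset.sum_congr rfl fun u _ => by ring
    rw [e1, ← hd, ← hz']
    ring
  -- key Lagrange identity
  have hLag : ∀ t, d t * S t - z t ^ 2 =
      (1/2) * ∑ u, ∑ v, c t u * c t v * (x u * y v - y u * x v) ^ 2 / (x u * x v) := by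
    intro t
    have step : ∀ u v : U, c t u * c t v * (x u * y v - y u * x v) ^ 2 / (x u * x v)
        = (c t u * x u) * (c t v * y v ^ 2 / x v)
          - 2 * ((c t u * y u) * (c t v * y v))
          + (c t u * y u ^ 2 / x u) * (c t v * x v) := by
      intro u v
      field_simp [hxne u, hxne v]
      ring
    have : ∑ u, ∑ v, c t u * c t v * (x u * y v - y u * x v) ^ 2 / (x u * x v)
        = (∑ u, c t u * x u) * (∑ v, c t v * y v ^ 2 / x v)
          - 2 * ((∑ u, c t u * y u) * (∑ v, c t v * y v))
          + (∑ u, c t u * y u ^ 2 / x u) * (∑ v, c t v * x v) := by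
      rw [Finset.sum_mul_sum, Finset.sum_mul_sum, Finset.sum_mul_sum,
        Finset.mul_sum, ← Finset.sum_sub_distrib, ← Finset.sum_add_distrib]
      refine Finset.sum_congr rfl fun u _ => ?_
      rw [Finset.mul_sum, ← Finset.sum_sub_distrib, ← Finset.sum_add_distrib]
      exact Finset.sum_congr rfl fun v _ => step u v
    rw [this, hd, hS, hz']
    ring
  -- each pair term nonneg
  have hpair_nonneg : ∀ t (u v : U),
      0 ≤ c t u * c t v * (x u * y v - y u * x v) ^ 2 / (x u * x v) := by
    intro t u v
    apply div_nonneg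
    · exact mul_nonneg (mul_nonneg (hc t u) (hc t v)) (sq_nonneg _)
    · exact (mul_pos (hxpos u) (hxpos v)).le
  have hE_nonneg : ∀ t, 0 ≤ d t * S t - z t ^ 2 := by
    intro t
    rw [hLag t]
    apply mul_nonneg (by norm_num)
    exact Finset.sum_nonneg fun u _ => Finset.sum_nonneg fun v _ => hpair_nonneg t u v
  -- α u * α (σ u) = x(σ u) * y u ^ 2 / x u
  have halpha : ∀ u, α u * α (σ u) = x (σ u) * y u ^ 2 / x u := by
    intro u
    have h1 : α u = x (σ u) * α (σ u) / x u := by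
      rw [eq_div_iff (hxne u)]
      linarith [hminor u]
    rw [h1, hy]
    ring
  -- ∑ α α∘σ = ∑ a S
  have hsumaS : (∑ u, α u * α (σ u)) = ∑ t, a t * S t := by
    calc (∑ u, α u * α (σ u)) = ∑ u, (∑ t, c t u * a t) * (y u ^ 2 / x u) := by
          refine Finset.sum_congr rfl fun u _ => ?_
          rw [halpha u, hxσ u]; ring
      _ = ∑ u, ∑ t, a t * (c t u * y u ^ 2 / x u) := by
          refine Finset.sum_congr rfl fun u _ => ?_
          rw [Finset.sum_mul]
          exact Finset.sum_congr rfl fun t _ => by ring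
      _ = ∑ t, a t * S t := by
          rw [Finset.sum_comm]
          exact Finset.sum_congr rfl fun t _ => by rw [Finset.mul_sum]
  -- Q
  have hQeq : (∑ t, a t / d t * (d t * S t - z t ^ 2)) = ∑ t, a t / d t * Hodge t := by
    have h1 : (∑ t, a t * lam t) = ∑ t, a t * S t := by
      have := hP0
      rw [hP] at this
      rw [← hsumaS]; linarith
    calc (∑ t, a t / d t * (d t * S t - z t ^ 2))
        = ∑ t, (a t * S t - a t / d t * z t ^ 2) := by
          refine Finset.sum_congr rfl fun t _ => ?_
          field_simp [hdne t]
      _ = (∑ t, a t * S t) - ∑ t, a t / d t * z t ^ 2 := Finset.sum_sub_distrib _ _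
      _ = (∑ t, a t * lam t) - ∑ t, a t / d t * z t ^ 2 := by rw [h1]
      _ = ∑ t, (a t * lam t - a t / d t * z t ^ 2) := (Finset.sum_sub_distrib _ _).symm
      _ = ∑ t, a t / d t * Hodge t := by
          refine Finset.sum_congr rfl fun t _ => ?_
          rw [hH2 t]
          field_simp [hdne t]
  have hQ_nonneg : 0 ≤ ∑ t, a t / d t * (d t * S t - z t ^ 2) :=
    Finset.sum_nonneg fun t _ => mul_nonneg (le_of_lt (div_pos (ha t) (hdpos t))) (hE_nonneg t)
  have hQ_nonpos : (∑ t, a t / d t * Hodge t) ≤ 0 :=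
    Finset.sum_nonpos fun t _ => mul_nonpos_of_nonneg_of_nonpos
      (le_of_lt (div_pos (ha t) (hdpos t))) (hHodge0 t)
  have hQ0 : (∑ t, a t / d t * (d t * S t - z t ^ 2)) = 0 :=
    le_antisymm (hQeq ▸ hQ_nonpos) hQ_nonneg
  -- each E t = 0
  have hE0 : ∀ t, d t * S t - z t ^ 2 = 0 := by
    intro t
    have h := (Finset.sum_eq_zero_iff_of_nonneg (fun t _ =>
      mul_nonneg (le_of_lt (div_pos (ha t) (hdpos t))) (hE_nonneg t))).mp hQ0 t (Finset.mem_univ t)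
    have hpos : 0 < a t / d t := div_pos (ha t) (hdpos t)
    exact (mul_eq_zero.mp h).resolve_left hpos.ne'
  -- each Hodge t = 0
  have hH0 : ∀ t, Hodge t = 0 := by
    intro t
    have hQ0' : (∑ t, a t / d t * Hodge t) = 0 := by rw [← hQeq]; exact hQ0
    have h := (Finset.sum_eq_zero_iff_of_nonpos (fun t _ => mul_nonpos_of_nonneg_of_nonpos
      (le_of_lt (div_pos (ha t) (hdpos t))) (hHodge0 t))).mp hQ0' t (Finset.mem_univ t)
    have hpos : 0 < a t / d t := div_pos (ha t) (hdpos t)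
    exact (mul_eq_zero.mp h).resolve_left hpos.ne'
  -- edge relation gives equal ratios
  have hedge : ∀ t (u v : U), 0 < c t u → 0 < c t v → x u * y v = y u * x v := by
    intro t u v hu hv
    have hsum0 : (∑ u, ∑ v, c t u * c t v * (x u * y v - y u * x v) ^ 2 / (x u * x v)) = 0 := by
      have := hLag t
      rw [hE0 t] at this
      linarith
    have h1 := (Finset.sum_eq_zero_iff_of_nonneg (fun u _ =>
      Finset.sum_nonneg fun v _ => hpair_nonneg t u v)).mp hsum0 u (Finset.mem_univ u)
    have h2 := (Finset.sum_eq_zero_iff_of_nonneg (fun v _ =>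
      hpair_nonneg t u v)).mp h1 v (Finset.mem_univ v)
    have hxx : 0 < x u * x v := mul_pos (hxpos u) (hxpos v)
    have h3 : c t u * c t v * (x u * y v - y u * x v) ^ 2 = 0 :=
      (div_eq_zero_iff.mp h2).resolve_right (mul_pos (hxpos u) (hxpos v)).ne'
    have h4 : (x u * y v - y u * x v) ^ 2 = 0 := by
      have hcc : c t u * c t v ≠ 0 := (mul_pos hu hv).ne'
      exact (mul_eq_zero.mp h3).resolve_left hcc
    have := sq_eq_zero_iff.mp h4
    linarith
  -- ratio constant
  obtain ⟨u0⟩ := ‹Nonempty U›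
  set ρ := y u0 / x u0 with hρ
  have hratio : ∀ u, y u = ρ * x u := by
    intro u
    have hch := hconn u0 u
    induction hch with
    | refl => rw [hρ, div_mul_cancel₀ _ (hxne u0)]
    | @tail b cc hbc hedge' ih =>
      obtain ⟨t, hb, hcpos⟩ := hedge'
      have h := hedge t b cc hb hcpos
      rw [ih] at h
      have hcc : x b * y cc = x b * (ρ * x cc) := by rw [h]; ring
      exact mul_left_cancel₀ (hxne b) hcc
  refine ⟨ρ, fun u => ?_, fun t => ?_⟩
  · rw [← hy, hratio u]
  · have hzt : z t = ρ * d t := by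
      rw [hz', hd, Finset.mul_sum]
      refine Finset.sum_congr rfl fun u _ => ?_
      rw [hratio u]; ring
    have h := hH0 t
    rw [hH2 t] at h
    have h5 : d t * lam t = z t ^ 2 := by linarith
    have h6 : d t * lam t = d t * (ρ * z t) := by rw [h5, hzt]; ring
    exact mul_left_cancel₀ (hdne t) h6
end
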